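/- Let W_aff be an affine Weyl group with simple reflections s_0,...,s_n and let Π_aff^{re,+} be the set of positive real roots. For any positive real root α, the length of the reflection s_α satisfies ℓ(s_α) ≤ 2·min{ht(α∨), ht(α)} − 1, where ht denotes the height (sum of coefficients in the simple root/coroot basis). -/

import Mathlib

/-- Elements of the affine root lattice (resp. affine coroot lattice) of the affine
(untwisted) Kac–Moody root system, written in coordinates with respect to the simple
roots `α_0, …, α_n` (resp. the simple coroots `α_0∨, …, α_n∨`).  The dominance
(partial) order `a ≤ b` (meaning `b - a` is a nonnegative combination of the simple
roots/coroots) is the coordinatewise order. -/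
abbrev AffLat (n : ℕ) := Fin (n + 1) → ℤ

/-- The `i`-th simple root (resp. simple coroot) as a coordinate vector. -/
def simpleVec {n : ℕ} (i : Fin (n + 1)) : AffLat n := Pi.single i 1

/-- The height of a root (resp. coroot): the sum of its coordinates in the basis of
simple roots (resp. simple coroots). -/
def htv {n : ℕ} (a : AffLat n) : ℤ := ∑ j, a j

/-- `a` is a simple root (a standard basis vector). -/
def IsSimpleVec {n : ℕ} (a : AffLat n) : Prop := ∃ i, a = simpleVec i

/-- Axiomatization of the affine (untwisted) Kac–Moody root system attached to a
finite simple Lie algebra, together with its affine Weyl group `W` (a Coxeter group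
with simple reflections `s_0, …, s_n`), its action on the root and coroot lattices,
the coroot map `α ↦ α∨` on real roots, the reflection map `α ↦ s_α`, and the
imaginary coroot `c = α_0∨ + θ∨`. -/
structure AffineRootSystem (n : ℕ) (W : Type*) [Group W] where
  /-- the affine Cartan matrix: `cartan i j = ⟨α_j, α_i∨⟩` -/
  cartan : Fin (n + 1) → Fin (n + 1) → ℤ
  cartan_diag : ∀ i, cartan i i = 2
  cartan_offdiag : ∀ i j, i ≠ j → cartan i j ≤ 0
  cartan_symm_zero : ∀ i j, cartan i j = 0 → cartan j i = 0
  /-- the Coxeter matrix of the affine Weyl group -/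
  M : CoxeterMatrix (Fin (n + 1))
  /-- the affine Weyl group, as a Coxeter system with simple reflections
  `cs.simple 0, …, cs.simple n` and Coxeter length `cs.length` -/
  cs : CoxeterSystem M W
  /-- the action of the affine Weyl group on the root lattice -/
  actR : W → AffLat n → AffLat n
  actR_one : ∀ a, actR 1 a = a
  actR_mul : ∀ u v a, actR (u * v) a = actR u (actR v a)
  actR_add : ∀ w a b, actR w (a + b) = actR w a + actR w b
  actR_simple : ∀ i a, actR (cs.simple i) a = a - (∑ k, cartan i k * a k) • simpleVec i
  /-- the action of the affine Weyl group on the coroot lattice -/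
  actC : W → AffLat n → AffLat n
  actC_one : ∀ b, actC 1 b = b
  actC_mul : ∀ u v b, actC (u * v) b = actC u (actC v b)
  actC_add : ∀ w a b, actC w (a + b) = actC w a + actC w b
  actC_simple : ∀ i b, actC (cs.simple i) b = b - (∑ k, cartan k i * b k) • simpleVec i
  /-- the coroot `α∨` of a real root `α` -/
  coroot : AffLat n → AffLat n
  coroot_simple : ∀ i, coroot (simpleVec i) = simpleVec i
  coroot_act : ∀ w a, coroot (actR w a) = actC w (coroot a)
  /-- the reflection `s_α ∈ W` of a real root `α` -/
  refl : AffLat n → W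
  refl_simple : ∀ i, refl (simpleVec i) = cs.simple i
  refl_act : ∀ w a, refl (actR w a) = w * refl a * w⁻¹
  /-- the coordinates of the imaginary coroot `c = α_0∨ + θ∨` in the basis of simple
  coroots; thus `imag 0 = 1` and `imag i = m_i` for `i ≥ 1`, where
  `θ∨ = m_1 α_1∨ + ⋯ + m_n α_n∨` -/
  imag : AffLat n
  imag_zero : imag 0 = 1
  imag_pos : ∀ i, 1 ≤ imag i
  imag_invariant : ∀ w, actC w imag = imag
  /-- the standard relation between lengths and positivity of roots:
  `ℓ(w s_α) < ℓ(w)` iff `w(α) < 0` -/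
  length_refl_lt_iff : ∀ a : AffLat n, (∃ w i, a = actR w (simpleVec i)) → 0 ≤ a →
    ∀ w : W, cs.length (w * refl a) < cs.length w ↔ actR w a ≤ 0

namespace AffineRootSystem

variable {n : ℕ} {W : Type*} [Group W] (R : AffineRootSystem n W)

/-- `α` is a positive real root of the affine root system. -/
def IsPosRoot (a : AffLat n) : Prop := (∃ w i, a = R.actR w (simpleVec i)) ∧ 0 ≤ a

/-- The evaluation pairing `⟨α, β∨⟩` of a root `α` (coordinates w.r.t. the simple
roots) against a coroot `β∨` (coordinates w.r.t. the simple coroots), computed via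
the affine Cartan matrix `cartan i k = ⟨α_k, α_i∨⟩`. -/
def pairing (a b : AffLat n) : ℤ := ∑ i, ∑ k, b i * (R.cartan i k * a k)

/-- `α` belongs to the set `Π̃` of positive real roots with `ℓ(s_α) = 2 ht(α∨) - 1`
(the roots appearing in the affine quantum Chevalley formula). -/
def IsChevalleyRoot (a : AffLat n) : Prop :=
  R.IsPosRoot a ∧ (R.cs.length (R.refl a) : ℤ) = 2 * htv (R.coroot a) - 1

end AffineRootSystem


namespace AffineRootSystem

variable {n : ℕ} {W : Type*} [Group W] (R : AffineRootSystem n W)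

/-- `⟨a, α_i∨⟩` -/
def pr (i : Fin (n + 1)) (a : AffLat n) : ℤ := ∑ k, R.cartan i k * a k

/-- `⟨α_i, b⟩` -/
def pc (i : Fin (n + 1)) (b : AffLat n) : ℤ := ∑ k, R.cartan k i * b k

def IsRealRoot (a : AffLat n) : Prop := ∃ w i, a = R.actR w (simpleVec i)

lemma actR_simple' (i : Fin (n + 1)) (a : AffLat n) :
    R.actR (R.cs.simple i) a = a - R.pr i a • simpleVec i := R.actR_simple i a

lemma actC_simple' (i : Fin (n + 1)) (b : AffLat n) :
    R.actC (R.cs.simple i) b = b - R.pc i b • simpleVec i := R.actC_simple i b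

lemma simpleVec_apply (i j : Fin (n + 1)) :
    simpleVec i j = if j = i then 1 else 0 := by
  simp [simpleVec, Pi.single_apply]

lemma pr_apply_linear (i : Fin (n + 1)) (a : AffLat n) (t : ℤ) (j : Fin (n + 1)) :
    R.pr i (a - t • simpleVec j) = R.pr i a - t * R.cartan i j := by
  simp only [pr, Pi.sub_apply, Pi.smul_apply, simpleVec_apply, smul_eq_mul,
    mul_sub, Finset.sum_sub_distrib]
  congr 1
  rw [Finset.sum_congr rfl (fun k _ => by
    show R.cartan i k * (t * if k = j then 1 else 0) = if k = j then t * R.cartan i j else 0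
    by_cases h : k = j <;> simp [h, mul_comm])]
  simp

lemma pc_apply_linear (i : Fin (n + 1)) (b : AffLat n) (t : ℤ) (j : Fin (n + 1)) :
    R.pc i (b - t • simpleVec j) = R.pc i b - t * R.cartan j i := by
  simp only [pc, Pi.sub_apply, Pi.smul_apply, simpleVec_apply, smul_eq_mul,
    mul_sub, Finset.sum_sub_distrib]
  congr 1
  rw [Finset.sum_congr rfl (fun k _ => by
    show R.cartan k i * (t * if k = j then 1 else 0) = if k = j then t * R.cartan j i else 0
    by_cases h : k = j <;> simp [h, mul_comm])]
  simp

lemma pr_single (i j : Fin (n + 1)) : R.pr i (simpleVec j) = R.cartan i j := by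
  simp only [pr, simpleVec_apply]
  rw [Finset.sum_congr rfl (fun k _ => by
    show R.cartan i k * (if k = j then 1 else 0) = if k = j then R.cartan i j else 0
    by_cases h : k = j <;> simp [h])]
  simp

lemma pairing_eq_pr (a b : AffLat n) : R.pairing a b = ∑ i, b i * R.pr i a := by
  simp [pairing, pr, Finset.mul_sum]

lemma pairing_eq_pc (a b : AffLat n) : R.pairing a b = ∑ k, a k * R.pc k b := by
  rw [pairing, Finset.sum_comm]
  refine Finset.sum_congr rfl fun k _ => ?_
  rw [pc, Finset.mul_sum]
  exact Finset.sum_congr rfl fun i _ => by ring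

lemma pairing_single_right (a : AffLat n) (i : Fin (n + 1)) :
    R.pairing a (simpleVec i) = R.pr i a := by
  rw [pairing_eq_pr]
  rw [Finset.sum_congr rfl (fun j _ => by
    show simpleVec i j * R.pr j a = if j = i then R.pr i a else 0
    rw [simpleVec_apply]; by_cases h : j = i <;> simp [h])]
  simp

lemma pairing_single_left (b : AffLat n) (i : Fin (n + 1)) :
    R.pairing (simpleVec i) b = R.pc i b := by
  rw [pairing_eq_pc]
  rw [Finset.sum_congr rfl (fun j _ => by
    show simpleVec i j * R.pc j b = if j = i then R.pc i b else 0
    rw [simpleVec_apply]; by_cases h : j = i <;> simp [h])]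
  simp

lemma pairing_act_simple (i : Fin (n + 1)) (a b : AffLat n) :
    R.pairing (R.actR (R.cs.simple i) a) (R.actC (R.cs.simple i) b) = R.pairing a b := by
  rw [actR_simple', actC_simple', pairing_eq_pr]
  have : ∀ j, (b - R.pc i b • simpleVec i) j * R.pr j (a - R.pr i a • simpleVec i)
      = b j * R.pr j a - R.pr i a * (b j * R.cartan j i)
        - R.pc i b * ((if j = i then 1 else 0) * R.pr j a)
        + R.pr i a * R.pc i b * ((if j = i then 1 else 0) * R.cartan j i) := by
    intro j
    rw [pr_apply_linear]
    simp only [Pi.sub_apply, Pi.smul_apply, simpleVec_apply, smul_eq_mul]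
    ring
  rw [Finset.sum_congr rfl fun j _ => this j]
  simp only [Finset.sum_add_distrib, Finset.sum_sub_distrib, ← Finset.mul_sum]
  have h1 : ∑ j, ((if j = i then (1:ℤ) else 0) * R.pr j a) = R.pr i a := by
    rw [Finset.sum_congr rfl (fun j _ => by
      show (if j = i then (1:ℤ) else 0) * R.pr j a = if j = i then R.pr i a else 0
      by_cases h : j = i <;> simp [h])]
    simp
  have h2 : ∑ j, ((if j = i then (1:ℤ) else 0) * R.cartan j i) = R.cartan i i := by
    rw [Finset.sum_congr rfl (fun j _ => by
      show (if j = i then (1:ℤ) else 0) * R.cartan j i = if j = i then R.cartan i i else 0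
      by_cases h : j = i <;> simp [h])]
    simp
  have h3 : ∑ j, b j * R.cartan j i = R.pc i b := by
    rw [pc]; exact Finset.sum_congr rfl fun j _ => by ring
  rw [h1, h2, h3, R.cartan_diag i, pairing_eq_pr]
  ring

lemma pairing_act (w : W) (a b : AffLat n) :
    R.pairing (R.actR w a) (R.actC w b) = R.pairing a b := by
  induction w using R.cs.simple_induction_left with
  | one => rw [R.actR_one, R.actC_one]
  | mul_simple_left w i ih =>
      rw [R.actR_mul, R.actC_mul, pairing_act_simple, ih]

lemma pairing_self (a : AffLat n) (ha : R.IsRealRoot a) :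
    R.pairing a (R.coroot a) = 2 := by
  obtain ⟨w, i, rfl⟩ := ha
  rw [R.coroot_act, R.coroot_simple, pairing_act, pairing_single_right, pr_single,
    R.cartan_diag]


section ActionLinearity

/-- `actR w` as an additive monoid hom. -/
def actRHom (w : W) : AffLat n →+ AffLat n := AddMonoidHom.mk' (R.actR w) (R.actR_add w)

def actCHom (w : W) : AffLat n →+ AffLat n := AddMonoidHom.mk' (R.actC w) (R.actC_add w)

lemma actR_zero (w : W) : R.actR w 0 = 0 := (R.actRHom w).map_zero

lemma actR_sub (w : W) (a b : AffLat n) : R.actR w (a - b) = R.actR w a - R.actR w b :=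
  (R.actRHom w).map_sub a b

lemma actR_neg (w : W) (a : AffLat n) : R.actR w (-a) = -R.actR w a :=
  (R.actRHom w).map_neg a

lemma actR_zsmul (w : W) (t : ℤ) (a : AffLat n) : R.actR w (t • a) = t • R.actR w a :=
  (R.actRHom w).map_zsmul t a

lemma actC_zero (w : W) : R.actC w 0 = 0 := (R.actCHom w).map_zero

lemma actC_neg (w : W) (b : AffLat n) : R.actC w (-b) = -R.actC w b :=
  (R.actCHom w).map_neg b

lemma actR_inv_cancel (w : W) (a : AffLat n) : R.actR w (R.actR w⁻¹ a) = a := by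
  rw [← R.actR_mul, mul_inv_cancel, R.actR_one]

lemma actR_cancel_inv (w : W) (a : AffLat n) : R.actR w⁻¹ (R.actR w a) = a := by
  rw [← R.actR_mul, inv_mul_cancel, R.actR_one]

end ActionLinearity

lemma actR_simple_single (i : Fin (n + 1)) :
    R.actR (R.cs.simple i) (simpleVec i) = -simpleVec i := by
  rw [actR_simple', pr_single, R.cartan_diag]
  ext j
  simp only [Pi.sub_apply, Pi.smul_apply, Pi.neg_apply, smul_eq_mul]
  ring

lemma actC_simple_single (i : Fin (n + 1)) :
    R.actC (R.cs.simple i) (simpleVec i) = -simpleVec i := by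
  have : R.pc i (simpleVec i) = 2 := by
    rw [pc]
    rw [Finset.sum_congr rfl (fun k _ => by
      show R.cartan k i * simpleVec i k = if k = i then R.cartan i i else 0
      rw [simpleVec_apply]; by_cases h : k = i <;> simp [h])]
    simp [R.cartan_diag]
  rw [actC_simple', this]
  ext j
  simp only [Pi.sub_apply, Pi.smul_apply, Pi.neg_apply, smul_eq_mul]
  ring

lemma coroot_real (a : AffLat n) (ha : R.IsRealRoot a) :
    ∃ w i, a = R.actR w (simpleVec i) ∧ R.coroot a = R.actC w (simpleVec i) := by
  obtain ⟨w, i, rfl⟩ := ha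
  exact ⟨w, i, rfl, by rw [R.coroot_act, R.coroot_simple]⟩

/-- the general reflection formula `s_α(x) = x - ⟨x, α∨⟩ α`. -/
lemma actR_refl (a : AffLat n) (ha : R.IsRealRoot a) (x : AffLat n) :
    R.actR (R.refl a) x = x - R.pairing x (R.coroot a) • a := by
  obtain ⟨w, i, rfl, hw⟩ := R.coroot_real a ha
  rw [R.refl_act, R.refl_simple, hw]
  rw [R.actR_mul, R.actR_mul, actR_simple', R.actR_sub, actR_inv_cancel, R.actR_zsmul]
  congr 2
  have : R.pr i (R.actR w⁻¹ x) = R.pairing (R.actR w⁻¹ x) (simpleVec i) :=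
    (R.pairing_single_right _ i).symm
  rw [this, ← R.pairing_act w, actR_inv_cancel]

lemma actR_refl_self (a : AffLat n) (ha : R.IsRealRoot a) :
    R.actR (R.refl a) a = -a := by
  rw [R.actR_refl a ha, R.pairing_self a ha, two_smul]
  abel

lemma actC_refl_self (a : AffLat n) (ha : R.IsRealRoot a) :
    R.actC (R.refl a) (R.coroot a) = -R.coroot a := by
  obtain ⟨w, i, rfl, hw⟩ := R.coroot_real a ha
  rw [R.refl_act, R.refl_simple, hw, R.actC_mul, R.actC_mul, ← R.actC_mul w⁻¹ w,
    inv_mul_cancel, R.actC_one, actC_simple_single, R.actC_neg]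

lemma refl_mul_self (a : AffLat n) (ha : R.IsRealRoot a) : R.refl a * R.refl a = 1 := by
  obtain ⟨w, i, rfl⟩ := ha
  rw [R.refl_act, R.refl_simple]
  rw [show w * R.cs.simple i * w⁻¹ * (w * R.cs.simple i * w⁻¹)
      = w * (R.cs.simple i * R.cs.simple i) * w⁻¹ by group,
    R.cs.simple_mul_simple_self, mul_one, mul_inv_cancel]

lemma refl_ne_one (a : AffLat n) (ha : R.IsRealRoot a) : R.refl a ≠ 1 := by
  obtain ⟨w, i, rfl⟩ := ha
  rw [R.refl_act, R.refl_simple]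
  intro h
  have : R.cs.simple i = 1 := by
    have := congrArg (fun u => w⁻¹ * u * w) h
    simpa [mul_assoc] using this
  have h1 := R.cs.length_simple i
  rw [this, R.cs.length_one] at h1
  exact one_ne_zero h1.symm

lemma isRealRoot_single (i : Fin (n + 1)) : R.IsRealRoot (simpleVec i) :=
  ⟨1, i, (R.actR_one _).symm⟩

lemma simpleVec_nonneg (i : Fin (n + 1)) : (0 : AffLat n) ≤ simpleVec i := by
  intro j
  rw [simpleVec_apply]
  by_cases h : j = i <;> simp [h]

/-- every real root is either nonnegative or nonpositive -/
lemma dichotomy (a : AffLat n) (ha : R.IsRealRoot a) : 0 ≤ a ∨ a ≤ 0 := by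
  obtain ⟨w, i, rfl⟩ := ha
  have key := R.length_refl_lt_iff (simpleVec i) (R.isRealRoot_single i) (simpleVec_nonneg i)
  have h1 := key w
  have h2 := key (w * R.cs.simple i)
  rw [R.refl_simple] at h1 h2
  rw [mul_assoc, R.cs.simple_mul_simple_self, mul_one] at h2
  have hact : R.actR (w * R.cs.simple i) (simpleVec i) = -R.actR w (simpleVec i) := by
    rw [R.actR_mul, actR_simple_single, R.actR_neg]
  rw [hact] at h2
  rcases R.cs.length_mul_simple w i with h | h
  · left
    have hlt : R.cs.length w < R.cs.length (w * R.cs.simple i) := by omega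
    have hle := h2.mp hlt
    intro j
    have := hle j
    simp only [Pi.neg_apply, Pi.zero_apply] at this ⊢
    omega
  · right
    exact h1.mp (by omega)


lemma pc_imag (i : Fin (n + 1)) : R.pc i R.imag = 0 := by
  have h := R.imag_invariant (R.cs.simple i)
  rw [actC_simple'] at h
  have h2 : R.pc i R.imag • simpleVec i = 0 := by
    have := congrArg (fun x => R.imag - x) h
    simpa using this
  have := congrFun h2 i
  simp only [Pi.smul_apply, simpleVec_apply, Pi.zero_apply, smul_eq_mul, if_pos rfl,
    mul_one] at this
  simpa using this

lemma pairing_imag (a : AffLat n) : R.pairing a R.imag = 0 := by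
  rw [pairing_eq_pc]
  rw [Finset.sum_congr rfl (fun k _ => by rw [R.pc_imag k, mul_zero])]
  simp

/-- for a real root, some `⟨a, α_k∨⟩` is positive -/
lemma exists_pr_pos (a : AffLat n) (ha : R.IsRealRoot a) : ∃ k, 0 < R.pr k a := by
  by_contra h
  push_neg at h
  have hz : ∀ i, R.pr i a = 0 := by
    have h0 : ∑ i, R.imag i * R.pr i a = 0 := by
      rw [← pairing_eq_pr, R.pairing_imag]
    intro i
    have hnp : ∀ j ∈ Finset.univ, R.imag j * R.pr j a ≤ 0 := fun j _ =>
      mul_nonpos_of_nonneg_of_nonpos (by linarith [R.imag_pos j]) (h j)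
    have := (Finset.sum_eq_zero_iff_of_nonpos hnp).mp h0 i (Finset.mem_univ i)
    have hip := R.imag_pos i
    nlinarith [h i]
  have h2 := R.pairing_self a ha
  rw [pairing_eq_pr] at h2
  rw [Finset.sum_congr rfl (fun i _ => by rw [hz i, mul_zero])] at h2
  simp at h2

lemma exists_pc_pos (a : AffLat n) (ha : R.IsRealRoot a) (hpos : 0 ≤ a) :
    ∃ k, 0 < R.pc k (R.coroot a) := by
  by_contra h
  push_neg at h
  have h2 := R.pairing_self a ha
  rw [pairing_eq_pc] at h2
  have : ∑ k, a k * R.pc k (R.coroot a) ≤ 0 :=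
    Finset.sum_nonpos fun k _ => mul_nonpos_of_nonneg_of_nonpos (hpos k) (h k)
  omega

lemma htv_sub_smul (a : AffLat n) (t : ℤ) (k : Fin (n + 1)) :
    htv (a - t • simpleVec k) = htv a - t := by
  simp only [htv, Pi.sub_apply, Pi.smul_apply, simpleVec_apply, smul_eq_mul,
    Finset.sum_sub_distrib]
  congr 1
  rw [Finset.sum_congr rfl (fun j _ => by
    show t * (if j = k then (1:ℤ) else 0) = if j = k then t else 0
    by_cases h : j = k <;> simp [h])]
  simp

lemma pairing_zero_left (b : AffLat n) : R.pairing 0 b = 0 := by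
  simp [pairing]

lemma ne_zero_of_real (a : AffLat n) (ha : R.IsRealRoot a) : a ≠ 0 := by
  intro h
  have := R.pairing_self a ha
  rw [h, pairing_zero_left] at this
  omega

lemma one_le_htv (a : AffLat n) (ha : R.IsRealRoot a) (hpos : 0 ≤ a) : 1 ≤ htv a := by
  have hne := R.ne_zero_of_real a ha
  have : ∃ j, a j ≠ 0 := by
    by_contra h
    push_neg at h
    exact hne (funext fun j => h j)
  obtain ⟨j, hj⟩ := this
  have h1 : 1 ≤ a j := by have := hpos j; simp only [Pi.zero_apply] at this; omega
  calc (1 : ℤ) ≤ a j := h1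
    _ ≤ ∑ i, a i := Finset.single_le_sum (fun i _ => hpos i) (Finset.mem_univ j)

/-- if `s_k a ≤ 0` for a positive real root `a`, then `s_a = s_k`. -/
lemma refl_eq_simple_of_neg (a : AffLat n) (ha : R.IsRealRoot a) (hpos : 0 ≤ a)
    (k : Fin (n + 1)) (hneg : R.actR (R.cs.simple k) a ≤ 0) :
    R.refl a = R.cs.simple k := by
  have h := (R.length_refl_lt_iff a ha hpos (R.cs.simple k)).mpr hneg
  rw [R.cs.length_simple, Nat.lt_one_iff, R.cs.length_eq_zero_iff] at h
  have := congrArg (fun u => (R.cs.simple k)⁻¹ * u) h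
  simpa [← mul_assoc] using this

/-- a positive real root whose reflection is simple has both heights 1. -/
lemma heights_of_refl_simple (a : AffLat n) (ha : R.IsRealRoot a) (hpos : 0 ≤ a)
    (k : Fin (n + 1)) (hrefl : R.refl a = R.cs.simple k) :
    htv a = 1 ∧ htv (R.coroot a) = 1 := by
  have hAct : R.actR (R.cs.simple k) a = -a := by rw [← hrefl]; exact R.actR_refl_self a ha
  have hActC : R.actC (R.cs.simple k) (R.coroot a) = -R.coroot a := by
    rw [← hrefl]; exact R.actC_refl_self a ha
  rw [actR_simple'] at hAct
  rw [actC_simple'] at hActC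
  set b := R.coroot a with hb
  have haj : ∀ j, 2 * a j = R.pr k a * (if j = k then 1 else 0) := by
    intro j
    have := congrFun hAct j
    simp only [Pi.sub_apply, Pi.smul_apply, Pi.neg_apply, smul_eq_mul, simpleVec_apply] at this
    linarith
  have hbj : ∀ j, 2 * b j = R.pc k b * (if j = k then 1 else 0) := by
    intro j
    have := congrFun hActC j
    simp only [Pi.sub_apply, Pi.smul_apply, Pi.neg_apply, smul_eq_mul, simpleVec_apply] at this
    linarith
  have haj' : ∀ j, j ≠ k → a j = 0 := fun j hj => by have := haj j; simp [hj] at this; omega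
  have hbj' : ∀ j, j ≠ k → b j = 0 := fun j hj => by have := hbj j; simp [hj] at this; omega
  -- pairing a b = a k * pc k b = a k * 2 * b k = 2
  have hp := R.pairing_self a ha
  rw [pairing_eq_pc, ← hb] at hp
  rw [Finset.sum_eq_single k (fun j _ hj => by rw [haj' j hj, zero_mul])
    (fun h => absurd (Finset.mem_univ k) h)] at hp
  have hpck : R.pc k b = 2 * b k := by have := hbj k; simp at this; omega
  rw [hpck] at hp
  have hab : a k * b k = 1 := by linarith
  have hak : 0 ≤ a k := hpos k
  have hak1 : a k = 1 ∧ b k = 1 := by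
    rcases Int.mul_eq_one_iff_eq_one_or_neg_one.mp hab with ⟨h1, h2⟩ | ⟨h1, h2⟩
    · exact ⟨h1, h2⟩
    · omega
  obtain ⟨ha1, hb1⟩ := hak1
  constructor
  · rw [htv, Finset.sum_eq_single k (fun j _ hj => haj' j hj)
      (fun h => absurd (Finset.mem_univ k) h), ha1]
  · rw [htv, Finset.sum_eq_single k (fun j _ hj => hbj' j hj)
      (fun h => absurd (Finset.mem_univ k) h), hb1]


lemma isRealRoot_act (w : W) (a : AffLat n) (ha : R.IsRealRoot a) :
    R.IsRealRoot (R.actR w a) := by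
  obtain ⟨u, i, rfl⟩ := ha
  exact ⟨w * u, i, by rw [R.actR_mul]⟩

/-- Bound by the height of the root, by induction on the height. -/
lemma lemA : ∀ (m : ℕ) (a : AffLat n), R.IsPosRoot a → (htv a).toNat ≤ m →
    (R.cs.length (R.refl a) : ℤ) ≤ 2 * htv a - 1 := by
  intro m
  induction m with
  | zero =>
    intro a ha hm
    have := R.one_le_htv a ha.1 ha.2
    omega
  | succ m ih =>
    intro a ha hm
    obtain ⟨hreal, hpos⟩ := ha
    obtain ⟨k, hk⟩ := R.exists_pr_pos a hreal
    have hreal' : R.IsRealRoot (R.actR (R.cs.simple k) a) := R.isRealRoot_act _ a hreal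
    rcases R.dichotomy _ hreal' with hpos' | hneg'
    · -- recursive case
      set X := R.refl (R.actR (R.cs.simple k) a) with hX
      have hht : htv (R.actR (R.cs.simple k) a) = htv a - R.pr k a := by
        rw [actR_simple', htv_sub_smul]
      have h1 := R.one_le_htv _ hreal' hpos'
      have h1a := R.one_le_htv a hreal hpos
      have hihm : (htv (R.actR (R.cs.simple k) a)).toNat ≤ m := by omega
      have hIH := ih _ ⟨hreal', hpos'⟩ hihm
      have hre : R.refl a = (R.cs.simple k)⁻¹ * X * R.cs.simple k := by
        rw [hX, R.refl_act]; group
      have hlen1 := R.cs.length_mul_le ((R.cs.simple k)⁻¹ * X) (R.cs.simple k)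
      have hlen2 := R.cs.length_mul_le (R.cs.simple k)⁻¹ X
      have hs : R.cs.length (R.cs.simple k) = 1 := R.cs.length_simple k
      have hsi : R.cs.length (R.cs.simple k)⁻¹ = 1 := by
        rw [R.cs.length_inv]; exact hs
      have hlen : R.cs.length (R.refl a) ≤ R.cs.length X + 2 := by
        rw [hre]; omega
      have hcast : (R.cs.length (R.refl a) : ℤ) ≤ (R.cs.length X : ℤ) + 2 := by
        exact_mod_cast hlen
      linarith
    · -- degenerate case
      have hrefl := R.refl_eq_simple_of_neg a hreal hpos k hneg'
      obtain ⟨h1, h2⟩ := R.heights_of_refl_simple a hreal hpos k hrefl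
      rw [hrefl, R.cs.length_simple, h1]
      norm_num


/-- Bound by the height of the coroot, by induction on the length. -/
lemma lemB : ∀ (m : ℕ) (a : AffLat n), R.IsPosRoot a → R.cs.length (R.refl a) ≤ m →
    (R.cs.length (R.refl a) : ℤ) ≤ 2 * htv (R.coroot a) - 1 := by
  intro m
  induction m with
  | zero =>
    intro a ha hm
    exact absurd (R.cs.length_eq_zero_iff.mp (Nat.le_zero.mp hm)) (R.refl_ne_one a ha.1)
  | succ m ih =>
    intro a ha hm
    obtain ⟨hreal, hpos⟩ := ha
    by_cases hlen1 : R.cs.length (R.refl a) ≤ 1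
    · -- length one case
      have hne : R.cs.length (R.refl a) ≠ 0 := fun h =>
        R.refl_ne_one a hreal (R.cs.length_eq_zero_iff.mp h)
      have hone : R.cs.length (R.refl a) = 1 := by omega
      obtain ⟨k, hk⟩ := R.cs.length_eq_one_iff.mp hone
      obtain ⟨_, h2⟩ := R.heights_of_refl_simple a hreal hpos k hk
      rw [hone, h2]; norm_num
    · push_neg at hlen1
      set w := R.refl a with hw
      obtain ⟨k, hdesc⟩ := R.cs.exists_rightDescent_of_ne_one (R.refl_ne_one a hreal)
      have hdesc' : R.cs.length (w * R.cs.simple k) < R.cs.length w := hdesc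
      have hy : R.actR w (simpleVec k) ≤ 0 := by
        apply (R.length_refl_lt_iff (simpleVec k) (R.isRealRoot_single k)
          (simpleVec_nonneg k) w).mp
        rw [R.refl_simple]; exact hdesc'
      set p := R.pc k (R.coroot a) with hp
      have hyf : R.actR w (simpleVec k) = simpleVec k - p • a := by
        rw [hw, R.actR_refl _ hreal, R.pairing_single_left]
      have hak : 0 ≤ a k := hpos k
      have hcoordk : (1:ℤ) - p * a k ≤ 0 := by
        have h0 := hy k
        rw [hyf] at h0
        simpa [simpleVec_apply] using h0
      have hp1 : 1 ≤ p := by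
        by_contra hc
        push_neg at hc
        have hple : p ≤ 0 := by omega
        have : p * a k ≤ 0 := mul_nonpos_iff.mpr (Or.inr ⟨hple, hak⟩)
        omega
      -- the reflected root is positive
      have hreal' := R.isRealRoot_act (R.cs.simple k) a hreal
      have hnotneg : ¬ R.actR (R.cs.simple k) a ≤ 0 := by
        intro hcon
        have hcon2 := (R.length_refl_lt_iff a hreal hpos (R.cs.simple k)).mpr hcon
        rw [R.cs.length_simple, Nat.lt_one_iff, R.cs.length_eq_zero_iff] at hcon2
        have hw1 : w = R.cs.simple k := by
          have := congrArg (fun u => (R.cs.simple k)⁻¹ * u) hcon2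
          simpa [← mul_assoc, R.cs.inv_simple] using this
        rw [hw1, R.cs.length_simple] at hlen1
        omega
      have hpos' : 0 ≤ R.actR (R.cs.simple k) a := (R.dichotomy _ hreal').resolve_right hnotneg
      -- length of s_k * w
      have hinv : w⁻¹ = w := inv_eq_of_mul_eq_one_right (R.refl_mul_self a hreal)
      have hlsw : R.cs.length (R.cs.simple k * w) = R.cs.length (w * R.cs.simple k) := by
        rw [← R.cs.length_inv (R.cs.simple k * w), mul_inv_rev, hinv, R.cs.inv_simple]
      have hlswv : R.cs.length (R.cs.simple k * w) + 1 = R.cs.length w := by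
        rcases R.cs.length_simple_mul w k with h | h
        · omega
        · exact h
      -- the second root y' = s_k y
      have hyreal : R.IsRealRoot (R.actR w (simpleVec k)) :=
        R.isRealRoot_act w _ (R.isRealRoot_single k)
      have hyreal' : R.IsRealRoot (R.actR (R.cs.simple k) (R.actR w (simpleVec k))) :=
        R.isRealRoot_act _ _ hyreal
      rcases R.dichotomy _ hyreal' with hy'pos | hy'neg
      · -- contradiction case: a is supported at k
        exfalso
        have hoffk : ∀ j, j ≠ k → a j = 0 := by
          intro j hj
          have e1 : R.actR (R.cs.simple k) (R.actR w (simpleVec k)) j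
              = R.actR w (simpleVec k) j := by
            rw [actR_simple']
            simp [simpleVec_apply, hj]
          have e2 := hy'pos j
          have e3 := hy j
          simp only [Pi.zero_apply] at e2 e3
          have e4 : R.actR w (simpleVec k) j = 0 := by omega
          rw [hyf] at e4
          simp only [Pi.sub_apply, Pi.smul_apply, simpleVec_apply, smul_eq_mul, hj,
            if_false] at e4
          have : p * a j = 0 := by omega
          rcases mul_eq_zero.mp this with h | h
          · omega
          · exact h
        have hprk : R.pr k a = 2 * a k := by
          rw [pr, Finset.sum_eq_single k (fun j _ hj => by rw [hoffk j hj, mul_zero])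
            (fun h => absurd (Finset.mem_univ k) h), R.cartan_diag]
        have hk' := hpos' k
        rw [actR_simple'] at hk'
        simp only [Pi.zero_apply, Pi.sub_apply, Pi.smul_apply, simpleVec_apply, smul_eq_mul,
          if_pos rfl, mul_one, hprk] at hk'
        norm_num at hk'
        have hak0 : a k = 0 := by omega
        apply R.ne_zero_of_real a hreal
        funext j
        by_cases hj : j = k
        · rw [hj, hak0]; rfl
        · rw [hoffk j hj]; rfl
      · -- main case: strict descent by 2
        have hdesc2 : R.cs.length (R.cs.simple k * w * R.cs.simple k)
            < R.cs.length (R.cs.simple k * w) := by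
          have h0 := (R.length_refl_lt_iff (simpleVec k) (R.isRealRoot_single k)
            (simpleVec_nonneg k) (R.cs.simple k * w)).mpr (by rw [R.actR_mul]; exact hy'neg)
          rw [R.refl_simple] at h0
          exact h0
        have hra' : R.refl (R.actR (R.cs.simple k) a) = R.cs.simple k * w * R.cs.simple k := by
          rw [R.refl_act, ← hw, R.cs.inv_simple]
        have hlm : R.cs.length (R.refl (R.actR (R.cs.simple k) a)) ≤ m := by
          rw [hra']; omega
        have hIH := ih _ ⟨hreal', hpos'⟩ hlm
        -- coroot of the reflected root
        have hcor : R.coroot (R.actR (R.cs.simple k) a) = R.coroot a - p • simpleVec k := by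
          rw [R.coroot_act, actC_simple', hp]
        have hhtv : htv (R.coroot (R.actR (R.cs.simple k) a)) = htv (R.coroot a) - p := by
          rw [hcor, htv_sub_smul]
        -- length of w in terms of the reflected reflection
        have hwe : w = R.cs.simple k * R.refl (R.actR (R.cs.simple k) a) * R.cs.simple k := by
          rw [hra', show R.cs.simple k * (R.cs.simple k * w * R.cs.simple k) * R.cs.simple k
            = (R.cs.simple k * R.cs.simple k) * w * (R.cs.simple k * R.cs.simple k) by group,
            R.cs.simple_mul_simple_self, one_mul, mul_one]
        have hlen1' := R.cs.length_mul_le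
          (R.cs.simple k * R.refl (R.actR (R.cs.simple k) a)) (R.cs.simple k)
        have hlen2' := R.cs.length_mul_le (R.cs.simple k) (R.refl (R.actR (R.cs.simple k) a))
        have hs : R.cs.length (R.cs.simple k) = 1 := R.cs.length_simple k
        have hlen : R.cs.length w ≤ R.cs.length (R.refl (R.actR (R.cs.simple k) a)) + 2 := by
          rw [hwe]; omega
        have hcast : (R.cs.length w : ℤ)
            ≤ (R.cs.length (R.refl (R.actR (R.cs.simple k) a)) : ℤ) + 2 := by
          exact_mod_cast hlen
        rw [hhtv] at hIH
        linarith only [hIH, hcast, hp1]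

end AffineRootSystem


/-- For any positive real root `α` of the affine root system,
`ℓ(s_α) ≤ 2 · min (ht α∨) (ht α) - 1`. -/
theorem length_reflection_le_two_min_height {n : ℕ} {W : Type*} [Group W]
    (R : AffineRootSystem n W) (a : AffLat n) (ha : R.IsPosRoot a) :
    (R.cs.length (R.refl a) : ℤ) ≤ 2 * min (htv (R.coroot a)) (htv a) - 1 := by
  have hA := R.lemA (htv a).toNat a ha le_rfl
  have hB := R.lemB (R.cs.length (R.refl a)) a ha le_rfl
  rcases min_cases (htv (R.coroot a)) (htv a) with ⟨h, _⟩ | ⟨h, _⟩ <;> rw [h]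
  · exact hB
  · exact hA
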